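/- Let μ > 0 and λ be real constants with λ + 2μ > 0. Fix y ∈ ℝ² and define the Kelvin fundamental-solution matrix Φ₀(x,y) := (1/(4π)) [ −((3μ+λ)/(μ(λ+2μ))) ln|x−y| · I + ((λ+μ)/(μ(λ+2μ))) ((x−y)⊗(x−y))/|x−y|² ] for x ≠ y, where I is the 2×2 identity matrix and (a⊗b)_{ij} := a_i b_j. Then for each j ∈ {1,2}, the column vector field x ↦ Φ₀(x,y)e_j satisfies the Lamé equation 𝓛₀(Φ₀(·,y)e_j) := μΔ(Φ₀(·,y)e_j) + (λ+μ)∇(div(Φ₀(·,y)e_j)) = 0 on ℝ² \ {y}. -/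

import Mathlib

noncomputable section

open Real

/-- The Euclidean plane. -/
abbrev E2 : Type := EuclideanSpace ℝ (Fin 2)

/-- Partial derivative `∂ᵢf` (with `i = 0` corresponding to `∂₁`). -/
noncomputable def pd (i : Fin 2) (f : E2 → ℝ) (x : E2) : ℝ :=
  fderiv ℝ f x (EuclideanSpace.single i 1)

/-- Laplacian of a scalar function. -/
noncomputable def lap (f : E2 → ℝ) (x : E2) : ℝ :=
  pd 0 (pd 0 f) x + pd 1 (pd 1 f) x

/-- Divergence `div u = ∂₁u₁ + ∂₂u₂`. -/
noncomputable def divg (u : E2 → Fin 2 → ℝ) (x : E2) : ℝ :=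
  pd 0 (fun y => u y 0) x + pd 1 (fun y => u y 1) x

/-- The Lamé operator `𝓛₀u = μΔu + (λ+μ)∇(div u)`, `i`-th component. -/
noncomputable def lame (μ lam : ℝ) (u : E2 → Fin 2 → ℝ) (x : E2) (i : Fin 2) : ℝ :=
  μ * lap (fun y => u y i) x + (lam + μ) * pd i (divg u) x

namespace KelvinAux

set_option maxHeartbeats 1000000

noncomputable def aa (y : E2) (i : Fin 2) (x : E2) : ℝ := x i - y i

noncomputable def RR (y : E2) (x : E2) : ℝ :=
  aa y 0 x * aa y 0 x + aa y 1 x * aa y 1 x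

lemma hasF_div {f g : E2 → ℝ} {f' g' : E2 →L[ℝ] ℝ} {x : E2} (hf : HasFDerivAt f f' x)
    (hg : HasFDerivAt g g' x) (h : g x ≠ 0) :
    HasFDerivAt (fun z => f z / g z) ((g x)⁻¹ • f' + (-(f x) * (g x ^ 2)⁻¹) • g') x := by
  have hinv : HasFDerivAt (fun z => (g z)⁻¹) ((-(g x ^ 2)⁻¹) • g') x :=
    (hasDerivAt_inv h).comp_hasFDerivAt x hg
  have hm := hf.mul hinv
  simp only [div_eq_mul_inv]
  refine (hm : HasFDerivAt (fun z => f z * (g z)⁻¹) _ x).congr_fderiv ?_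
  ext v
  simp
  ring

lemma hasF_aa (y : E2) (i : Fin 2) (x : E2) :
    HasFDerivAt (aa y i) (EuclideanSpace.proj i : E2 →L[ℝ] ℝ) x := by
  have := ((EuclideanSpace.proj (𝕜 := ℝ) i).hasFDerivAt (x := x)).sub_const (y i)
  exact this

lemma hasF_RR (y : E2) (x : E2) :
    HasFDerivAt (RR y) ((2 * aa y 0 x) • (EuclideanSpace.proj 0 : E2 →L[ℝ] ℝ)
      + (2 * aa y 1 x) • (EuclideanSpace.proj 1 : E2 →L[ℝ] ℝ)) x := by
  have h0 := (((hasF_aa y 0 x).mul (hasF_aa y 0 x))).add ((hasF_aa y 1 x).mul (hasF_aa y 1 x))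
  refine (h0 : HasFDerivAt (RR y) _ x).congr_fderiv ?_
  ext v
  simp
  ring

lemma proj_single (i k : Fin 2) :
    (EuclideanSpace.proj i : E2 →L[ℝ] ℝ) (EuclideanSpace.single k 1)
      = if k = i then (1:ℝ) else 0 := by
  simp [EuclideanSpace.single_apply, eq_comm]

lemma pd_log_RR (y : E2) (k : Fin 2) (x : E2) (h : RR y x ≠ 0) :
    pd k (fun z => Real.log (RR y z)) x = 2 * (aa y k x / RR y x) := by
  rw [pd, ((hasF_RR y x).log h).fderiv]
  fin_cases k <;> simp [proj_single] <;> ring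

lemma pd_a_div (y : E2) (k m : Fin 2) (x : E2) (h : RR y x ≠ 0) :
    pd m (fun z => aa y k z / RR y z) x
      = (if m = k then (1:ℝ) else 0) / RR y x - 2 * aa y k x * aa y m x / RR y x ^ 2 := by
  rw [pd, (hasF_div (hasF_aa y k x) (hasF_RR y x) h).fderiv]
  fin_cases m <;> simp [proj_single, eq_comm] <;> split_ifs <;> field_simp <;> ring

lemma pd_aa_div (y : E2) (i j k : Fin 2) (x : E2) (h : RR y x ≠ 0) :
    pd k (fun z => aa y i z * aa y j z / RR y z) x
      = (if k = i then (1:ℝ) else 0) * (aa y j x / RR y x)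
        + (if k = j then (1:ℝ) else 0) * (aa y i x / RR y x)
        - 2 * (aa y i x * aa y j x * aa y k x / RR y x ^ 2) := by
  rw [pd, HasFDerivAt.fderiv (f := fun z => aa y i z * aa y j z / RR y z) (hasF_div ((hasF_aa y i x).mul (hasF_aa y j x)) (hasF_RR y x) h)]
  fin_cases k <;> simp [proj_single, eq_comm] <;> split_ifs <;> field_simp <;> ring

lemma pd_aaa (y : E2) (i j k m : Fin 2) (x : E2) (h : RR y x ≠ 0) :
    pd m (fun z => aa y i z * aa y j z * aa y k z / (RR y z * RR y z)) x
      = ((if m = i then (1:ℝ) else 0) * aa y j x * aa y k x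
          + (if m = j then (1:ℝ) else 0) * aa y i x * aa y k x
          + (if m = k then (1:ℝ) else 0) * aa y i x * aa y j x) / RR y x ^ 2
        - 4 * (aa y i x * aa y j x * aa y k x * aa y m x / RR y x ^ 3) := by
  rw [pd, HasFDerivAt.fderiv (f := fun z => aa y i z * aa y j z * aa y k z / (RR y z * RR y z)) (hasF_div (((hasF_aa y i x).mul (hasF_aa y j x)).mul (hasF_aa y k x))
    ((hasF_RR y x).mul (hasF_RR y x)) (mul_ne_zero h h))]
  fin_cases m <;> simp [proj_single, eq_comm] <;> split_ifs <;> field_simp <;> ring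

/-- Differentiability of the basic pieces. -/
lemma diff_log (y : E2) (x : E2) (h : RR y x ≠ 0) :
    DifferentiableAt ℝ (fun z => Real.log (RR y z)) x :=
  (((hasF_RR y x).log h)).differentiableAt

lemma diff_a_div (y : E2) (k : Fin 2) (x : E2) (h : RR y x ≠ 0) :
    DifferentiableAt ℝ (fun z => aa y k z / RR y z) x :=
  (hasF_div (hasF_aa y k x) (hasF_RR y x) h).differentiableAt

lemma diff_aa_div (y : E2) (i j : Fin 2) (x : E2) (h : RR y x ≠ 0) :
    DifferentiableAt ℝ (fun z => aa y i z * aa y j z / RR y z) x :=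
  (hasF_div ((hasF_aa y i x).mul (hasF_aa y j x)) (hasF_RR y x) h).differentiableAt

lemma diff_aaa (y : E2) (i j k : Fin 2) (x : E2) (h : RR y x ≠ 0) :
    DifferentiableAt ℝ (fun z => aa y i z * aa y j z * aa y k z / (RR y z * RR y z)) x :=
  (hasF_div (((hasF_aa y i x).mul (hasF_aa y j x)).mul (hasF_aa y k x))
    ((hasF_RR y x).mul (hasF_RR y x)) (mul_ne_zero h h)).differentiableAt

lemma pd_comb {f g : E2 → ℝ} (k : Fin 2) (x : E2) (c d : ℝ)
    (hf : DifferentiableAt ℝ f x) (hg : DifferentiableAt ℝ g x) :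
    pd k (fun z => c * f z + d * g z) x = c * pd k f x + d * pd k g x := by
  unfold pd
  rw [fderiv_fun_add ((hf.const_mul c)) ((hg.const_mul d)), fderiv_const_mul hf,
    fderiv_const_mul hg]
  simp

lemma pd_add {f g : E2 → ℝ} (k : Fin 2) (x : E2)
    (hf : DifferentiableAt ℝ f x) (hg : DifferentiableAt ℝ g x) :
    pd k (fun z => f z + g z) x = pd k f x + pd k g x := by
  unfold pd
  rw [fderiv_fun_add hf hg]
  simp

lemma pd_comb4 {f1 f2 f3 f4 : E2 → ℝ} (k : Fin 2) (x : E2) (c1 c2 c3 c4 : ℝ)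
    (h1 : DifferentiableAt ℝ f1 x) (h2 : DifferentiableAt ℝ f2 x)
    (h3 : DifferentiableAt ℝ f3 x) (h4 : DifferentiableAt ℝ f4 x) :
    pd k (fun z => c1 * f1 z + c2 * f2 z + c3 * f3 z + c4 * f4 z) x
      = c1 * pd k f1 x + c2 * pd k f2 x + c3 * pd k f3 x + c4 * pd k f4 x := by
  unfold pd
  rw [fderiv_fun_add (f := fun z => c1 * f1 z + c2 * f2 z + c3 * f3 z) (((h1.const_mul c1).add (h2.const_mul c2)).add (h3.const_mul c3))
      (h4.const_mul c4),
    fderiv_fun_add (f := fun z => c1 * f1 z + c2 * f2 z) ((h1.const_mul c1).add (h2.const_mul c2)) (h3.const_mul c3),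
    fderiv_fun_add (h1.const_mul c1) (h2.const_mul c2),
    fderiv_const_mul h1, fderiv_const_mul h2, fderiv_const_mul h3, fderiv_const_mul h4]
  simp

/-- Column entry of the Kelvin matrix, in convenient form. -/
noncomputable def FF (y : E2) (c1 c2 : ℝ) (i j : Fin 2) : E2 → ℝ := fun z =>
  c1 * Real.log (RR y z) + c2 * (aa y i z * aa y j z / RR y z)

/-- First derivative of `FF`. -/
noncomputable def GG (y : E2) (c1 c2 : ℝ) (i j k : Fin 2) : E2 → ℝ := fun z =>
  (2 * c1) * (aa y k z / RR y z)
    + (c2 * (if k = i then (1:ℝ) else 0)) * (aa y j z / RR y z)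
    + (c2 * (if k = j then (1:ℝ) else 0)) * (aa y i z / RR y z)
    + (-(2 * c2)) * (aa y i z * aa y j z * aa y k z / (RR y z * RR y z))

lemma pd_FF (y : E2) (c1 c2 : ℝ) (i j k : Fin 2) (x : E2) (h : RR y x ≠ 0) :
    pd k (FF y c1 c2 i j) x = GG y c1 c2 i j k x := by
  unfold FF GG
  rw [pd_comb k x c1 c2 (diff_log y x h) (diff_aa_div y i j x h),
    pd_log_RR y k x h, pd_aa_div y i j k x h]
  ring

lemma diff_GG (y : E2) (c1 c2 : ℝ) (i j k : Fin 2) (x : E2) (h : RR y x ≠ 0) :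
    DifferentiableAt ℝ (GG y c1 c2 i j k) x := by
  unfold GG
  exact ((((diff_a_div y k x h).const_mul _).add ((diff_a_div y j x h).const_mul _)).add
    ((diff_a_div y i x h).const_mul _)).add ((diff_aaa y i j k x h).const_mul _)

lemma pd_GG (y : E2) (c1 c2 : ℝ) (i j k m : Fin 2) (x : E2) (h : RR y x ≠ 0) :
    pd m (GG y c1 c2 i j k) x
      = (2 * c1) * ((if m = k then (1:ℝ) else 0) / RR y x
            - 2 * aa y k x * aa y m x / RR y x ^ 2)
        + (c2 * (if k = i then (1:ℝ) else 0)) * ((if m = j then (1:ℝ) else 0) / RR y x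
            - 2 * aa y j x * aa y m x / RR y x ^ 2)
        + (c2 * (if k = j then (1:ℝ) else 0)) * ((if m = i then (1:ℝ) else 0) / RR y x
            - 2 * aa y i x * aa y m x / RR y x ^ 2)
        + (-(2 * c2)) * (((if m = i then (1:ℝ) else 0) * aa y j x * aa y k x
              + (if m = j then (1:ℝ) else 0) * aa y i x * aa y k x
              + (if m = k then (1:ℝ) else 0) * aa y i x * aa y j x) / RR y x ^ 2
            - 4 * (aa y i x * aa y j x * aa y k x * aa y m x / RR y x ^ 3)) := by
  unfold GG
  rw [pd_comb4 m x _ _ _ _ (diff_a_div y k x h) (diff_a_div y j x h) (diff_a_div y i x h)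
    (diff_aaa y i j k x h),
    pd_a_div y k m x h, pd_a_div y j m x h, pd_a_div y i m x h, pd_aaa y i j k m x h]

lemma pd_GG' (y : E2) (c1 c2 : ℝ) (i j k m : Fin 2) (x : E2) (h : RR y x ≠ 0) :
    pd m (GG y c1 c2 i j k) x
      = ((2 * c1) * ((if m = k then (1:ℝ) else 0) * RR y x ^ 2
            - 2 * aa y k x * aa y m x * RR y x)
          + (c2 * (if k = i then (1:ℝ) else 0)) * ((if m = j then (1:ℝ) else 0) * RR y x ^ 2
            - 2 * aa y j x * aa y m x * RR y x)
          + (c2 * (if k = j then (1:ℝ) else 0)) * ((if m = i then (1:ℝ) else 0) * RR y x ^ 2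
            - 2 * aa y i x * aa y m x * RR y x)
          + (-(2 * c2)) * (((if m = i then (1:ℝ) else 0) * aa y j x * aa y k x
              + (if m = j then (1:ℝ) else 0) * aa y i x * aa y k x
              + (if m = k then (1:ℝ) else 0) * aa y i x * aa y j x) * RR y x
            - 4 * (aa y i x * aa y j x * aa y k x * aa y m x)))
        / RR y x ^ 3 := by
  rw [pd_GG y c1 c2 i j k m x h]
  field_simp

lemma pd_congr {f g : E2 → ℝ} {s : Set E2} (hs : IsOpen s) (h : Set.EqOn f g s) (i : Fin 2) :
    Set.EqOn (pd i f) (pd i g) s := by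
  intro x hx
  unfold pd
  rw [Filter.EventuallyEq.fderiv_eq (h.eventuallyEq_of_mem (hs.mem_nhds hx))]

lemma norm_sub_eq (y x : E2) : ‖x - y‖ = Real.sqrt (RR y x) := by
  rw [EuclideanSpace.norm_eq]
  congr 1
  rw [Fin.sum_univ_two]
  simp only [Real.norm_eq_abs, sq_abs, PiLp.sub_apply, RR, aa]
  ring

lemma RR_nonneg (y x : E2) : 0 ≤ RR y x := by
  unfold RR
  nlinarith [mul_self_nonneg (aa y 0 x), mul_self_nonneg (aa y 1 x)]

lemma RR_ne (y x : E2) (hx : x ≠ y) : RR y x ≠ 0 := by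
  have h1 : ‖x - y‖ ≠ 0 := by
    simpa [sub_eq_zero] using hx
  have := norm_sub_eq y x
  intro h0
  rw [h0, Real.sqrt_zero] at this
  exact h1 this


noncomputable def c1f (μ lam : ℝ) (i j : Fin 2) : ℝ :=
  -(1 / (4 * π) * ((3 * μ + lam) / (μ * (lam + 2 * μ))) * (if i = j then (1:ℝ) else 0)) / 2

noncomputable def c2v (μ lam : ℝ) : ℝ := 1 / (4 * π) * ((lam + μ) / (μ * (lam + 2 * μ)))

end KelvinAux

set_option maxHeartbeats 4000000 in
open Real KelvinAux in
/-- Each column of the Kelvin fundamental-solution matrix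
`Φ₀(x,y) = (1/4π)[−((3μ+λ)/(μ(λ+2μ))) ln|x−y| I + ((λ+μ)/(μ(λ+2μ))) (x−y)⊗(x−y)/|x−y|²]`
satisfies the Lamé equation `𝓛₀(Φ₀(·,y)eⱼ) = 0` on `ℝ² \ {y}`. -/
theorem kelvin_matrix_columns_solve_lame
    (μ lam : ℝ) (hμ : 0 < μ) (hlam : 0 < lam + 2 * μ)
    (y : E2)
    (Phi : E2 → Fin 2 → Fin 2 → ℝ)
    (hPhi : ∀ x : E2, x ≠ y → ∀ i j : Fin 2,
      Phi x i j = (1 / (4 * π)) *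
        (-((3 * μ + lam) / (μ * (lam + 2 * μ))) * Real.log ‖x - y‖ *
            (if i = j then 1 else 0)
          + ((lam + μ) / (μ * (lam + 2 * μ))) * ((x - y) i * (x - y) j) / ‖x - y‖ ^ 2)) :
    ∀ j : Fin 2, ∀ x : E2, x ≠ y → ∀ i : Fin 2,
      lame μ lam (fun z k => Phi z k j) x i = 0 := by
  intro j x hx i
  have hR := RR_ne y x hx
  have hso : IsOpen ({y}ᶜ : Set E2) := isOpen_compl_singleton
  have hxs : x ∈ ({y}ᶜ : Set E2) := Set.mem_compl_singleton_iff.mpr hx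
  -- the columns agree with FF on the complement of {y}
  have hcol : ∀ i' j' : Fin 2,
      Set.EqOn (fun z => Phi z i' j') (FF y (c1f μ lam i' j') (c2v μ lam) i' j') ({y}ᶜ) := by
    intro i' j' z hz
    have hzy : z ≠ y := hz
    have hnn := RR_nonneg y z
    simp only [FF, c1f, c2v]
    rw [hPhi z hzy i' j', norm_sub_eq y z, Real.log_sqrt hnn, Real.sq_sqrt hnn]
    simp only [PiLp.sub_apply, aa]
    ring
  have hGcol : ∀ (i' j' k : Fin 2),
      Set.EqOn (pd k (fun z => Phi z i' j')) (GG y (c1f μ lam i' j') (c2v μ lam) i' j' k)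
        ({y}ᶜ) := by
    intro i' j' k
    exact (pd_congr hso (hcol i' j') k).trans
      (fun z hz => pd_FF y _ _ i' j' k z (RR_ne y z hz))
  have e00 : pd 0 (pd 0 (fun z => Phi z i j)) x
      = pd 0 (GG y (c1f μ lam i j) (c2v μ lam) i j 0) x := pd_congr hso (hGcol i j 0) 0 hxs
  have e11 : pd 1 (pd 1 (fun z => Phi z i j)) x
      = pd 1 (GG y (c1f μ lam i j) (c2v μ lam) i j 1) x := pd_congr hso (hGcol i j 1) 1 hxs
  have hdiv : Set.EqOn (divg (fun z k => Phi z k j))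
      (fun z => GG y (c1f μ lam 0 j) (c2v μ lam) 0 j 0 z
        + GG y (c1f μ lam 1 j) (c2v μ lam) 1 j 1 z) ({y}ᶜ) := by
    intro z hz
    show pd 0 (fun w => Phi w 0 j) z + pd 1 (fun w => Phi w 1 j) z = _
    rw [hGcol 0 j 0 hz, hGcol 1 j 1 hz]
  have ediv : pd i (divg (fun z k => Phi z k j)) x
      = pd i (GG y (c1f μ lam 0 j) (c2v μ lam) 0 j 0) x
        + pd i (GG y (c1f μ lam 1 j) (c2v μ lam) 1 j 1) x := by
    rw [pd_congr hso hdiv i hxs]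
    exact pd_add i x (diff_GG y _ _ 0 j 0 x hR) (diff_GG y _ _ 1 j 1 x hR)
  show μ * (pd 0 (pd 0 (fun z => Phi z i j)) x + pd 1 (pd 1 (fun z => Phi z i j)) x)
      + (lam + μ) * pd i (divg (fun z k => Phi z k j)) x = 0
  rw [e00, e11, ediv, pd_GG' y _ _ i j 0 0 x hR, pd_GG' y _ _ i j 1 1 x hR,
    pd_GG' y _ _ 0 j 0 i x hR, pd_GG' y _ _ 1 j 1 i x hR,
    ← add_div, ← add_div, ← mul_div_assoc, ← mul_div_assoc,
    ← add_div, div_eq_zero_iff]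
  left
  simp only [c1f, c2v, RR]
  fin_cases i <;> fin_cases j <;> norm_num <;> ring
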